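/- A group G is left-orderable if and only if for every finite subset {x₁, …, xₙ} of G not containing the identity element, there exist ε₁, …, εₙ ∈ {−1, 1} such that the subsemigroup of G generated by x₁^{ε₁}, …, xₙ^{εₙ} does not contain the identity element of G. -/

import Mathlib

open Filter Topology Set

/-- A group is left-orderable if it admits a linear order invariant under
left multiplication: `g ≺ h` implies `f * g ≺ f * h`. -/
def IsLeftOrderable (G : Type*) [Group G] : Prop :=
  ∃ r : LinearOrder G, ∀ f g h : G, r.lt g h → r.lt (f * g) (f * h)

/-- A group `G` is left-orderable iff for every finite subset `{x₁, …, xₙ}` of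
`G` not containing the identity, there are signs `εᵢ ∈ {−1, 1}` such that the
subsemigroup generated by `x₁ ^ ε₁, …, xₙ ^ εₙ` does not contain the identity. -/
theorem isLeftOrderable_iff_semigroup_criterion {G : Type*} [Group G] :
    IsLeftOrderable G ↔
      ∀ (n : ℕ) (x : Fin n → G), (∀ i, x i ≠ 1) →
        ∃ ε : Fin n → ℤ, (∀ i, ε i = 1 ∨ ε i = -1) ∧
          (1 : G) ∉ Subsemigroup.closure (Set.range fun i => x i ^ ε i) := by
  constructor
  · rintro ⟨r, hr⟩ n x hx
    letI := r
    refine ⟨fun i => if 1 < x i then 1 else -1, fun i => by dsimp only; split <;> simp, ?_⟩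
    have hpos : ∀ i, (1:G) < x i ^ (if 1 < x i then (1:ℤ) else -1) := by
      intro i
      split_ifs with h
      · simpa using h
      · rcases lt_trichotomy (x i) 1 with h' | h' | h'
        · have := hr (x i)⁻¹ (x i) 1 h'
          simpa using this
        · exact absurd h' (hx i)
        · exact absurd h' h
    intro hmem
    have key : ∀ g ∈ Subsemigroup.closure
        (Set.range fun i => x i ^ (if 1 < x i then (1:ℤ) else -1)), (1:G) < g := by
      intro g hg
      induction hg using Subsemigroup.closure_induction with
      | mem g hg => obtain ⟨i, rfl⟩ := hg; exact hpos i
      | mul a b _ _ ha hb =>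
        have h1 : a < a * b := by simpa using hr a 1 b hb
        exact lt_trans ha h1
    exact absurd (key 1 hmem) (lt_irrefl 1)
  · intro H
    classical
    have key : ∀ s : Finset G, ∃ e : G → ℤ, (∀ g, e g = 1 ∨ e g = -1) ∧
        (1:G) ∉ Subsemigroup.closure ((fun g => g ^ e g) '' {g | g ∈ s ∧ g ≠ 1}) := by
      intro s
      set t := s.filter (· ≠ 1) with ht
      have htmem : ∀ g, g ∈ t ↔ g ∈ s ∧ g ≠ 1 := by
        intro g; simp [ht]
      obtain ⟨ε, hε, hcl⟩ := H t.card (fun i => (t.equivFin.symm i : G))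
        (fun i => ((htmem _).1 (t.equivFin.symm i).2).2)
      refine ⟨fun g => if h : g ∈ t then ε (t.equivFin ⟨g, h⟩) else 1, ?_, ?_⟩
      · intro g; dsimp only; split
        · exact hε _
        · exact Or.inl rfl
      · have hset : ((fun g : G => g ^ (if h : g ∈ t then ε (t.equivFin ⟨g, h⟩) else 1)) ''
            {g | g ∈ s ∧ g ≠ 1}) = (Set.range fun i => (t.equivFin.symm i : G) ^ ε i) := by
          ext y
          constructor
          · rintro ⟨g, hg, rfl⟩
            have hgt : g ∈ t := (htmem g).2 hg
            refine ⟨t.equivFin ⟨g, hgt⟩, ?_⟩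
            simp only [Equiv.symm_apply_apply]
            rw [dif_pos hgt]
          · rintro ⟨i, rfl⟩
            refine ⟨(t.equivFin.symm i : G), (htmem _).1 (t.equivFin.symm i).2, ?_⟩
            dsimp only
            rw [dif_pos (t.equivFin.symm i).2]
            congr 1
            simp
        intro hmem
        rw [hset] at hmem
        exact hcl hmem
    choose e he1 he2 using key
    let U : Ultrafilter (Finset G) := Ultrafilter.of atTop
    have hU : ∀ s : Finset G, {u : Finset G | s ⊆ u} ∈ U :=
      fun s => Ultrafilter.of_le atTop (Filter.mem_atTop s)
    set P : Set G := {g | g ≠ 1 ∧ {s : Finset G | e s g = 1} ∈ U} with hP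
    have memgen : ∀ (s : Finset G) (g : G), g ∈ s → g ≠ 1 → e s g = 1 →
        g ∈ Subsemigroup.closure ((fun g => g ^ e s g) '' {g | g ∈ s ∧ g ≠ 1}) := by
      intro s g hgs hg1 heg
      apply Subsemigroup.subset_closure
      exact ⟨g, ⟨hgs, hg1⟩, by simp [heg]⟩
    have memgen' : ∀ (s : Finset G) (g : G), g ∈ s → g ≠ 1 → e s g = -1 →
        g⁻¹ ∈ Subsemigroup.closure ((fun g => g ^ e s g) '' {g | g ∈ s ∧ g ≠ 1}) := by
      intro s g hgs hg1 heg
      apply Subsemigroup.subset_closure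
      exact ⟨g, ⟨hgs, hg1⟩, by simp [heg]⟩
    have mulP : ∀ g h : G, g ∈ P → h ∈ P → g * h ∈ P := by
      rintro g h ⟨hg1, hgU⟩ ⟨hh1, hhU⟩
      have hsub : {u : Finset G | g ∈ u ∧ h ∈ u ∧ g * h ∈ u} ∈ U := by
        filter_upwards [hU {g, h, g*h}] with u hu
        exact ⟨hu (by simp), hu (by simp), hu (by simp)⟩
      have hgh1 : g * h ≠ 1 := by
        intro hgh
        obtain ⟨u, ⟨⟨hgu, hhu, _⟩, hge⟩, hhe⟩ :=
          Ultrafilter.nonempty_of_mem (Filter.inter_mem (Filter.inter_mem hsub hgU) hhU)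
        have := Subsemigroup.mul_mem _ (memgen u g hgu hg1 hge) (memgen u h hhu hh1 hhe)
        rw [hgh] at this
        exact he2 u this
      refine ⟨hgh1, ?_⟩
      by_contra hc
      have hcU : {s : Finset G | e s (g*h) = 1}ᶜ ∈ U := Ultrafilter.compl_mem_iff_notMem.2 hc
      obtain ⟨u, ⟨⟨⟨hgu, hhu, hghu⟩, hge⟩, hhe⟩, hghe⟩ :=
        Ultrafilter.nonempty_of_mem
          (Filter.inter_mem (Filter.inter_mem (Filter.inter_mem hsub hgU) hhU) hcU)
      have hghe' : e u (g*h) = -1 := ((he1 u (g*h)).resolve_left hghe)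
      have h1 : (g*h) ∈ Subsemigroup.closure ((fun x => x ^ e u x) '' {x | x ∈ u ∧ x ≠ 1}) :=
        Subsemigroup.mul_mem _ (memgen u g hgu hg1 hge) (memgen u h hhu hh1 hhe)
      have h2 := memgen' u (g*h) hghu hgh1 hghe'
      have := Subsemigroup.mul_mem _ h1 h2
      rw [mul_inv_cancel] at this
      exact he2 u this
    have trichP : ∀ g : G, g ≠ 1 → g ∈ P ∨ g⁻¹ ∈ P := by
      intro g hg1
      have hginv1 : g⁻¹ ≠ 1 := by simpa using hg1
      by_contra hc
      push_neg at hc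
      obtain ⟨hcg, hcgi⟩ := hc
      have h1 : {s : Finset G | e s g = 1}ᶜ ∈ U :=
        Ultrafilter.compl_mem_iff_notMem.2 (fun hm => hcg ⟨hg1, hm⟩)
      have h2 : {s : Finset G | e s g⁻¹ = 1}ᶜ ∈ U :=
        Ultrafilter.compl_mem_iff_notMem.2 (fun hm => hcgi ⟨hginv1, hm⟩)
      have hsub : {u : Finset G | g ∈ u ∧ g⁻¹ ∈ u} ∈ U := by
        filter_upwards [hU {g, g⁻¹}] with u hu
        exact ⟨hu (by simp), hu (by simp)⟩
      obtain ⟨u, ⟨⟨hgu, hgiu⟩, hge⟩, hgie⟩ :=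
        Ultrafilter.nonempty_of_mem (Filter.inter_mem (Filter.inter_mem hsub h1) h2)
      have hge' : e u g = -1 := (he1 u g).resolve_left hge
      have hgie' : e u g⁻¹ = -1 := (he1 u g⁻¹).resolve_left hgie
      have m1 := memgen' u g hgu hg1 hge'
      have m2 := memgen' u g⁻¹ hgiu hginv1 hgie'
      have := Subsemigroup.mul_mem _ m1 m2
      rw [mul_inv_cancel] at this
      exact he2 u this
    have oneP : (1:G) ∉ P := fun h => h.1 rfl
    set rel : G → G → Prop := fun g h => g⁻¹ * h ∈ P with hrel
    haveI : IsTrans G rel := ⟨by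
      intro a b c hab hbc
      have := mulP _ _ hab hbc
      simpa [hrel, mul_assoc] using this⟩
    haveI : IsIrrefl G rel := ⟨by
      intro a ha
      simp only [hrel, inv_mul_cancel] at ha
      exact oneP ha⟩
    haveI : IsTrichotomous G rel := ⟨by
      intro a b
      refine (fun H : rel a b ∨ a = b ∨ rel b a => fun h1 h2 => (H.resolve_left h1).resolve_right h2) ?_
      rcases eq_or_ne a b with h | h
      · exact Or.inr (Or.inl h)
      · have hne : a⁻¹ * b ≠ 1 := by
          intro hh; exact h (by simpa [eq_comm] using (inv_mul_eq_one.mp hh))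
        rcases trichP _ hne with hp | hp
        · exact Or.inl hp
        · refine Or.inr (Or.inr ?_)
          simpa [hrel, mul_inv_rev] using hp⟩
    haveI : IsStrictTotalOrder G rel := {}
    haveI : DecidableRel rel := fun _ _ => Classical.dec _
    refine ⟨linearOrderOfSTO rel, ?_⟩
    intro f g h hlt
    have hlt' : rel g h := hlt
    show rel (f*g) (f*h)
    simp only [hrel, mul_inv_rev] at hlt' ⊢
    simpa [mul_assoc] using hlt'
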